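/- Let G be a cograph on 2n vertices admitting a partition (V1, V2) such that G[V1] is isomorphic to the complement of G[V2] and the edges between V1 and V2 form a perfect matching. Then n = 1 and G is the single edge K_2. -/

import Mathlib

open SimpleGraph

/-- `(V1, V1ᶜ)` is a perfect matching cut of `G`. -/
def IsPerfectMatchingCut {V : Type*} (G : SimpleGraph V) (V1 : Set V) : Prop :=
  ∀ v : V, ∃! w : V, G.Adj v w ∧ (v ∈ V1 ↔ w ∉ V1)

lemma p4_embed {V : Type*} {G : SimpleGraph V} {a b c d : V}
    (hab : G.Adj a b) (hbc : G.Adj b c) (hcd : G.Adj c d)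
    (hac : ¬ G.Adj a c) (had : ¬ G.Adj a d) (hbd : ¬ G.Adj b d)
    (nac : a ≠ c) (nad : a ≠ d) (nbd : b ≠ d) :
    Nonempty (pathGraph 4 ↪g G) := by
  have nab := hab.ne; have nbc := hbc.ne; have ncd := hcd.ne
  have hba := hab.symm; have hcb := hbc.symm; have hdc := hcd.symm
  have hca : ¬ G.Adj c a := fun h => hac h.symm
  have hda : ¬ G.Adj d a := fun h => had h.symm
  have hdb : ¬ G.Adj d b := fun h => hbd h.symm
  refine ⟨⟨⟨![a,b,c,d], ?_⟩, ?_⟩⟩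
  · intro i j h
    fin_cases i <;> fin_cases j <;> simp_all
  · intro i j
    fin_cases i <;> fin_cases j <;>
      simp_all [pathGraph_adj] <;> assumption

/-- A cograph on `2n` vertices admitting a complementary decomposition with a perfect
matching cut must be `K₂`. -/
theorem cograph_comp_sub_pm {V : Type*} [Fintype V] (G : SimpleGraph V) (n : ℕ)
    (hn : 1 ≤ n) (hcard : Fintype.card V = 2 * n)
    (hcog : IsEmpty (pathGraph 4 ↪g G))
    (V1 : Set V)
    (hcut : IsPerfectMatchingCut G V1)
    (hiso : Nonempty (G.induce V1 ≃g (G.induce V1ᶜ)ᶜ)) :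
    n = 1 ∧ Nonempty (G ≃g completeGraph (Fin 2)) := by
  classical
  obtain ⟨φ⟩ := hiso
  have hcut' := hcut
  unfold IsPerfectMatchingCut at hcut'
  simp only [ExistsUnique] at hcut'
  choose f hP huniq using hcut'
  have hadj : ∀ v, G.Adj v (f v) := fun v => (hP v).1
  have hside : ∀ v, v ∈ V1 ↔ f v ∉ V1 := fun v => (hP v).2
  have noP4 : ∀ a b c d : V, G.Adj a b → G.Adj b c → G.Adj c d → ¬G.Adj a c → ¬G.Adj a d →
      ¬G.Adj b d → a ≠ c → a ≠ d → b ≠ d → False := by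
    intro a b c d h1 h2 h3 h4 h5 h6 h7 h8 h9
    exact (p4_embed h1 h2 h3 h4 h5 h6 h7 h8 h9).elim hcog.false
  have hff : ∀ v, f (f v) = v := by
    intro v
    exact (huniq (f v) v ⟨(hadj v).symm, by have := hside v; have := hside (f v); tauto⟩).symm
  have finj : ∀ {x y : V}, f x = f y → x = y := by
    intro x y h
    rw [← hff x, h, hff]
  have hnadj : ∀ v w, (v ∈ V1 ↔ w ∉ V1) → w ≠ f v → ¬ G.Adj v w :=
    fun v w hs hne ha => hne (huniq v w ⟨ha, hs⟩)
  -- matching preserves same-side adjacency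
  have matchAdj : ∀ x y, (x ∈ V1 ↔ y ∈ V1) → G.Adj x y → G.Adj (f x) (f y) := by
    intro x y hs hxy
    by_contra hc
    have nxy := hxy.ne
    have nfxy : f x ≠ f y := fun h => nxy (finj h)
    have h1 : ¬ G.Adj (f x) y := by
      intro h
      exact hnadj y (f x) (by have := hside x; tauto) nfxy h.symm
    have h2 : ¬ G.Adj x (f y) :=
      hnadj x (f y) (by have := hside y; tauto) (Ne.symm nfxy)
    have d1 : f x ≠ y := by have := hside x; intro h; rw [h] at this; tauto
    have d2 : x ≠ f y := by have := hside y; intro h; rw [← h] at this; tauto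
    exact noP4 (f x) x y (f y) (hadj x).symm hxy (hadj y) h1 hc h2 d1 nfxy d2
  -- no induced P3 within one side
  have noP3 : ∀ x y z, (x ∈ V1 ↔ y ∈ V1) → (x ∈ V1 ↔ z ∈ V1) → x ≠ z →
      G.Adj x y → G.Adj y z → ¬ G.Adj x z → False := by
    intro x y z hsy hsz hxz hxy hyz hnxz
    have nxy := hxy.ne
    have h1 : ¬ G.Adj (f x) y := by
      intro h
      exact hnadj y (f x) (by have := hside x; tauto)
        (fun h' => nxy (finj h')) h.symm
    have h2 : ¬ G.Adj (f x) z := by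
      intro h
      exact hnadj z (f x) (by have := hside x; tauto)
        (fun h' => hxz (finj h')) h.symm
    have d1 : f x ≠ y := by have := hside x; intro h; rw [h] at this; tauto
    have d2 : f x ≠ z := by have := hside x; intro h; rw [h] at this; tauto
    exact noP4 (f x) x y z (hadj x).symm hxy hyz h1 h2 hnxz d1 d2 hxz
  -- translation of the isomorphism
  have hphi : ∀ a b : ↥V1, G.Adj ↑a ↑b ↔ (↑(φ a) : V) ≠ ↑(φ b) ∧ ¬ G.Adj ↑(φ a) ↑(φ b) := by
    intro a b
    have h := φ.map_adj_iff (v := a) (w := b)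
    rw [compl_adj] at h
    rw [show ((G.induce V1).Adj a b ↔ G.Adj ↑a ↑b) from Iff.rfl] at h
    rw [show ((G.induce V1ᶜ).Adj (φ a) (φ b) ↔ G.Adj ↑(φ a) ↑(φ b)) from Iff.rfl] at h
    rw [← h]
    constructor
    · intro hh; exact ⟨fun he => hh.1 (Subtype.ext he), hh.2⟩
    · intro hh; exact ⟨fun he => hh.1 (Subtype.ext_iff.mp he), hh.2⟩
  -- cardinality: |V1| = n
  have hc1 : V1.ncard = n := by
    have h1 : Nat.card ↥V1 = Nat.card ↥(V1ᶜ) := Nat.card_congr φ.toEquiv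
    have h2 := Set.ncard_add_ncard_compl V1 (Set.toFinite _) (Set.toFinite _)
    have h3 : Nat.card V = Fintype.card V := Nat.card_eq_fintype_card
    simp only [Set.ncard, Nat.card_coe_set_eq] at *
    omega
  -- first main goal: n = 1
  have hn1 : n = 1 := by
    by_contra hne1
    have h2n : 2 ≤ n := by omega
    have : 1 < V1.ncard := by omega
    obtain ⟨x, hx, y, hy, hxyne⟩ := (Set.one_lt_ncard (Set.toFinite _)).mp this
    have noK2K1 : ∀ a b z, a ∈ V1 → b ∈ V1 → z ∈ V1 → G.Adj a b → z ≠ a → z ≠ b →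
        ¬G.Adj z a → ¬G.Adj z b → False := by
      intro a b z ha hb hz hab hza hzb hna hnb
      set A : ↥V1 := ⟨a, ha⟩
      set B : ↥V1 := ⟨b, hb⟩
      set Z : ↥V1 := ⟨z, hz⟩
      have hZA : (↑(φ Z) : V) ≠ ↑(φ A) := by
        intro h
        exact hza (Subtype.ext_iff.mp (φ.toEquiv.injective (Subtype.ext h)))
      have hZB : (↑(φ Z) : V) ≠ ↑(φ B) := by
        intro h
        exact hzb (Subtype.ext_iff.mp (φ.toEquiv.injective (Subtype.ext h)))
      have aZA : G.Adj ↑(φ Z) ↑(φ A) := by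
        have := (hphi Z A).not.mp hna
        tauto
      have aZB : G.Adj ↑(φ Z) ↑(φ B) := by
        have := (hphi Z B).not.mp hnb
        tauto
      have hAB := (hphi A B).mp hab
      have m1 : (↑(φ A) : V) ∉ V1 := (φ A).2
      have m2 : (↑(φ B) : V) ∉ V1 := (φ B).2
      have m3 : (↑(φ Z) : V) ∉ V1 := (φ Z).2
      exact noP3 (↑(φ A)) (↑(φ Z)) (↑(φ B)) (iff_of_false m1 m3) (iff_of_false m1 m2)
        hAB.1 aZA.symm aZB hAB.2
    have hA : ∀ a b z, a ∈ V1 → b ∈ V1 → z ∈ V1 → G.Adj a b → z ≠ a → z ≠ b →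
        G.Adj z a := by
      intro a b z ha hb hz hab hza hzb
      by_contra hna
      by_cases hzb' : G.Adj z b
      · exact noP3 z b a (iff_of_true hz hb) (iff_of_true hz ha) hza hzb' hab.symm hna
      · exact noK2K1 a b z ha hb hz hab hza hzb hna hzb'
    by_cases hE : ∃ a ∈ V1, ∃ b ∈ V1, G.Adj a b
    · -- V1 is complete, V1ᶜ is empty, contradiction with matching
      obtain ⟨a₀, ha₀, b₀, hb₀, hab₀⟩ := hE
      have hadjall : ∀ z ∈ V1, z ≠ a₀ → G.Adj z a₀ := by
        intro z hz hne
        by_cases hzb : z = b₀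
        · subst hzb; exact hab₀.symm
        · exact hA a₀ b₀ z ha₀ hb₀ hz hab₀ hne hzb
      have hcomp : ∀ a ∈ V1, ∀ b ∈ V1, a ≠ b → G.Adj a b := by
        intro a ha b hb hne
        by_cases haa : a = a₀
        · subst haa; exact (hadjall b hb (Ne.symm hne)).symm
        · have h1 : G.Adj a a₀ := hadjall a ha haa
          by_cases hbb : b = a₀
          · subst hbb; exact h1
          · exact (hA a a₀ b ha ha₀ hb h1 (Ne.symm hne) hbb).symm
      have hxy : G.Adj x y := hcomp x hx y hy hxyne
      have hf : G.Adj (f x) (f y) := matchAdj x y (iff_of_true hx hy) hxy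
      have hfx : f x ∉ V1 := (hside x).mp hx
      have hfy : f y ∉ V1 := (hside y).mp hy
      set u : ↥(V1ᶜ) := ⟨f x, hfx⟩
      set v : ↥(V1ᶜ) := ⟨f y, hfy⟩
      have huv : φ.symm u ≠ φ.symm v := by
        intro h
        have : u = v := by
          have := congrArg φ h
          rwa [φ.apply_symm_apply, φ.apply_symm_apply] at this
        exact hf.ne (Subtype.ext_iff.mp this)
      have hsuv : (↑(φ.symm u) : V) ≠ ↑(φ.symm v) := fun h => huv (Subtype.ext h)
      have hadjs : G.Adj ↑(φ.symm u) ↑(φ.symm v) :=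
        hcomp _ (φ.symm u).2 _ (φ.symm v).2 hsuv
      have := (hphi (φ.symm u) (φ.symm v)).mp hadjs
      rw [φ.apply_symm_apply, φ.apply_symm_apply] at this
      exact this.2 hf
    · -- V1 is empty, V1ᶜ is complete, contradiction with matching
      push_neg at hE
      have hfx : f x ∉ V1 := (hside x).mp hx
      have hfy : f y ∉ V1 := (hside y).mp hy
      have hfxy : f x ≠ f y := fun h => hxyne (finj h)
      have hnf : ¬ G.Adj (f x) (f y) := by
        intro h
        have := matchAdj (f x) (f y) (iff_of_false hfx hfy) h
        rw [hff, hff] at this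
        exact hE x hx y hy this
      set u : ↥(V1ᶜ) := ⟨f x, hfx⟩
      set v : ↥(V1ᶜ) := ⟨f y, hfy⟩
      have hnp : ¬ G.Adj ↑(φ.symm u) ↑(φ.symm v) := hE _ (φ.symm u).2 _ (φ.symm v).2
      have := (hphi (φ.symm u) (φ.symm v)).not.mp hnp
      rw [φ.apply_symm_apply, φ.apply_symm_apply] at this
      simp only [not_and, not_not] at this
      exact hnf (this hfxy)
  subst hn1
  refine ⟨rfl, ?_⟩
  have hcard2 : Fintype.card V = 2 := by omega
  have key : ∀ v w : V, v ≠ w → G.Adj v w := by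
    intro v w hne
    have hfv : f v ≠ v := (hadj v).ne'
    have hwf : w = f v := by
      by_contra hwf
      have hvmem : v ∉ ({w, f v} : Finset V) := by simp [hne, Ne.symm hfv]
      have hwmem : w ∉ ({f v} : Finset V) := by simp [hwf]
      have h3 : ({v, w, f v} : Finset V).card = 3 := by
        rw [Finset.card_insert_of_notMem hvmem, Finset.card_insert_of_notMem hwmem,
          Finset.card_singleton]
      have := Finset.card_le_univ ({v, w, f v} : Finset V)
      rw [h3] at this
      omega
    subst hwf
    exact hadj v
  have e : V ≃ Fin 2 := Fintype.equivFinOfCardEq hcard2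
  refine ⟨{ toEquiv := e, map_rel_iff' := ?_ }⟩
  intro a b
  simp only [completeGraph, Equiv.coe_fn_mk, top_adj, ne_eq, EmbeddingLike.apply_eq_iff_eq]
  constructor
  · intro h
    exact key a b h
  · intro h
    exact h.ne
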